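/- In the additive group of F_25 = Z/5[x]/(x²+2), the sets B_1 = B'_1 ∪ (-B'_1), B_2 = B'_2 ∪ (-B'_2), B_3 = B'_3 ∪ {0} ∪ (-B'_3), B_4 = B'_4 ∪ {0} ∪ (-B'_4), where B'_1 = {1,2,1+x,1-2x,2+x,2+2x}, B'_2 = {1,2,x,2x,1+x,2+2x}, B'_3 = {1,2,2-x,2-2x}, B'_4 = {1+x,1-x,1+2x,2+2x}, form a symmetric supplementary difference set with parameters (25; 12, 12, 9, 9; 17). -/

import Mathlib

open Polynomial

/-- The field F₂₅ = ℤ/5[x]/(x²+2). -/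
noncomputable abbrev F25 : Type := AdjoinRoot (X ^ 2 + 2 : (ZMod 5)[X])

/-- Number of representations of `a` as a difference u - v with u, v ∈ S. -/
noncomputable def diffCount {G : Type*} [AddCommGroup G] (S : Set G) (a : G) : ℕ :=
  Set.ncard {p : G × G | p.1 ∈ S ∧ p.2 ∈ S ∧ p.1 - p.2 = a}

section Aux

lemma SDS.hf_mon : (X ^ 2 + 2 : (ZMod 5)[X]).Monic := by
  have h2 : (2 : (ZMod 5)[X]) = C 2 := (map_ofNat C 2).symm
  rw [h2]; exact monic_X_pow_add_C _ (by norm_num)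

lemma SDS.hf_deg : (X ^ 2 + 2 : (ZMod 5)[X]).natDegree = 2 := by compute_degree!

noncomputable def SDS.pb : PowerBasis (ZMod 5) F25 := AdjoinRoot.powerBasis' SDS.hf_mon

lemma SDS.pb_dim : SDS.pb.dim = 2 := SDS.hf_deg

noncomputable def SDS.b : Module.Basis (Fin 2) (ZMod 5) F25 :=
  SDS.pb.basis.reindex (finCongr SDS.pb_dim)

lemma SDS.b_apply (i : Fin 2) : SDS.b i = SDS.pb.gen ^ (i : ℕ) := by
  rw [SDS.b, Module.Basis.reindex_apply, PowerBasis.coe_basis]; rfl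

lemma SDS.b_zero : SDS.b 0 = 1 := by rw [SDS.b_apply]; norm_num

lemma SDS.b_one : SDS.b 1 = AdjoinRoot.root _ := by
  rw [SDS.b_apply]; simp [SDS.pb, AdjoinRoot.powerBasis']

noncomputable def SDS.phi : F25 ≃+ (ZMod 5 × ZMod 5) :=
  SDS.b.equivFun.toAddEquiv.trans
    { toFun := fun f => (f 0, f 1)
      invFun := fun p => ![p.1, p.2]
      left_inv := fun f => by funext i; fin_cases i <;> rfl
      right_inv := fun p => rfl
      map_add' := fun f g => rfl }

namespace SDS

lemma phi_key (r s : ZMod 5) : phi (r • (1 : F25) + s • AdjoinRoot.root _) = (r, s) := by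
  rw [← b_zero, ← b_one]
  show (b.equivFun (r • b 0 + s • b 1) 0, b.equivFun (r • b 0 + s • b 1) 1) = (r, s)
  simp [Module.Basis.equivFun_apply, Finsupp.single_apply]

lemma phi_val (r s : ZMod 5) :
    phi ((algebraMap (ZMod 5) F25 r) + (algebraMap (ZMod 5) F25 s) * AdjoinRoot.root _)
      = (r, s) := by
  simpa [Algebra.smul_def] using phi_key r s

noncomputable abbrev x0 : F25 := AdjoinRoot.root _

lemma v1 : phi (1 : F25) = (1, 0) := by simpa [map_ofNat, map_one] using phi_val 1 0
lemma v2 : phi (2 : F25) = (2, 0) := by simpa [map_ofNat, map_one] using phi_val 2 0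
lemma v3 : phi x0 = (0, 1) := by simpa [map_ofNat, map_one] using phi_val 0 1
lemma v4 : phi (2 * x0) = (0, 2) := by simpa [map_ofNat, map_one] using phi_val 0 2
lemma v5 : phi ((1 : F25) + x0) = (1, 1) := by simpa [map_ofNat, map_one] using phi_val 1 1
lemma v6 : phi ((1 : F25) - 2 * x0) = (1, -2) := by
  simpa [map_ofNat, map_one, map_neg, sub_eq_add_neg, neg_mul] using phi_val 1 (-2)
lemma v7 : phi ((2 : F25) + x0) = (2, 1) := by simpa [map_ofNat, map_one] using phi_val 2 1
lemma v8 : phi ((2 : F25) + 2 * x0) = (2, 2) := by simpa [map_ofNat, map_one] using phi_val 2 2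
lemma v9 : phi ((1 : F25) - x0) = (1, -1) := by
  simpa [map_ofNat, map_one, map_neg, sub_eq_add_neg, neg_mul] using phi_val 1 (-1)
lemma v10 : phi ((1 : F25) + 2 * x0) = (1, 2) := by simpa [map_ofNat, map_one] using phi_val 1 2
lemma v11 : phi ((2 : F25) - x0) = (2, -1) := by
  simpa [map_ofNat, map_one, map_neg, sub_eq_add_neg, neg_mul] using phi_val 2 (-1)
lemma v12 : phi ((2 : F25) - 2 * x0) = (2, -2) := by
  simpa [map_ofNat, map_one, map_neg, sub_eq_add_neg, neg_mul] using phi_val 2 (-2)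
lemma v0 : phi (0 : F25) = (0, 0) := map_zero _

lemma image_neg_eq {G H : Type*} [AddCommGroup G] [AddCommGroup H] (e : G ≃+ H) (S : Set G) :
    e '' (-S) = -(e '' S) := by
  ext h
  simp only [Set.mem_neg, Set.mem_image]
  constructor
  · rintro ⟨p, hp, rfl⟩
    exact ⟨-p, hp, by simp⟩
  · rintro ⟨p, hp, hph⟩
    exact ⟨-p, by simpa using hp, by simp [hph]⟩

lemma diffCount_equiv {G H : Type*} [AddCommGroup G] [AddCommGroup H]
    (e : G ≃+ H) (S : Set G) (a : G) :
    diffCount S a = diffCount (e '' S) (e a) := by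
  unfold diffCount
  rw [← Set.ncard_image_of_injective {p : G × G | p.1 ∈ S ∧ p.2 ∈ S ∧ p.1 - p.2 = a}
      (Prod.map_injective.mpr ⟨e.injective, e.injective⟩)]
  congr 1
  ext ⟨u, v⟩
  constructor
  · rintro ⟨w, hw, hwe⟩
    obtain ⟨hp, hq, hpq⟩ := hw
    rw [← hwe]
    exact ⟨⟨w.1, hp, rfl⟩, ⟨w.2, hq, rfl⟩, by simp [← map_sub, hpq]⟩
  · rintro ⟨⟨p, hp, hpu⟩, ⟨q, hq, hqv⟩, h3⟩
    refine ⟨(p, q), ⟨hp, hq, e.injective ?_⟩, ?_⟩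
    · rw [map_sub, hpu, hqv]; exact h3
    · simp [Prod.ext_iff, hpu, hqv]

lemma diffCount_finset (F : Finset (ZMod 5 × ZMod 5)) (a : ZMod 5 × ZMod 5) :
    diffCount (↑F : Set (ZMod 5 × ZMod 5)) a
      = ((F ×ˢ F).filter (fun p => p.1 - p.2 = a)).card := by
  rw [diffCount, ← Set.ncard_coe_finset]
  congr 1
  ext ⟨u, v⟩
  simp [Finset.mem_filter, Finset.mem_product, and_assoc]

def F1 : Finset (ZMod 5 × ZMod 5) :=
  {(1,0), (2,0), (1,1), (1,-2), (2,1), (2,2), (-1,0), (-2,0), (-1,-1), (-1,2), (-2,-1), (-2,-2)}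
def F2 : Finset (ZMod 5 × ZMod 5) :=
  {(1,0), (2,0), (0,1), (0,2), (1,1), (2,2), (-1,0), (-2,0), (0,-1), (0,-2), (-1,-1), (-2,-2)}
def F3 : Finset (ZMod 5 × ZMod 5) :=
  {(1,0), (2,0), (2,-1), (2,-2), (0,0), (-1,0), (-2,0), (-2,1), (-2,2)}
def F4 : Finset (ZMod 5 × ZMod 5) :=
  {(1,1), (1,-1), (1,2), (2,2), (0,0), (-1,-1), (-1,1), (-1,-2), (-2,-2)}

set_option maxHeartbeats 2000000 in
lemma count_lemma : ∀ a : ZMod 5 × ZMod 5, a ≠ 0 →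
    ((F1 ×ˢ F1).filter (fun p => p.1 - p.2 = a)).card
    + ((F2 ×ˢ F2).filter (fun p => p.1 - p.2 = a)).card
    + ((F3 ×ˢ F3).filter (fun p => p.1 - p.2 = a)).card
    + ((F4 ×ˢ F4).filter (fun p => p.1 - p.2 = a)).card = 17 := by decide

end SDS

end Aux

open SDS in
/-- in F₂₅, the four sets B₁,...,B₄ below form a symmetric SDS with
parameters (25; 12, 12, 9, 9; 17). -/
theorem stmt11 (x : F25) (hx : x = AdjoinRoot.root _)
    (B1' B2' B3' B4' B1 B2 B3 B4 : Set F25)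
    (hB1' : B1' = {1, 2, 1 + x, 1 - 2*x, 2 + x, 2 + 2*x})
    (hB2' : B2' = {1, 2, x, 2*x, 1 + x, 2 + 2*x})
    (hB3' : B3' = {1, 2, 2 - x, 2 - 2*x})
    (hB4' : B4' = {1 + x, 1 - x, 1 + 2*x, 2 + 2*x})
    (hB1 : B1 = B1' ∪ (-B1'))
    (hB2 : B2 = B2' ∪ (-B2'))
    (hB3 : B3 = B3' ∪ {0} ∪ (-B3'))
    (hB4 : B4 = B4' ∪ {0} ∪ (-B4')) :
    B1.ncard = 12 ∧ B2.ncard = 12 ∧ B3.ncard = 9 ∧ B4.ncard = 9 ∧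
    B1 = -B1 ∧ B2 = -B2 ∧ B3 = -B3 ∧ B4 = -B4 ∧
    ∀ a : F25, a ≠ 0 →
      diffCount B1 a + diffCount B2 a + diffCount B3 a + diffCount B4 a = 17 := by
  subst hx hB1' hB2' hB3' hB4'
  have i1 : phi '' B1 = ↑F1 := by
    rw [hB1, Set.image_union, image_neg_eq]
    simp only [Set.image_insert_eq, Set.image_singleton, v1, v2, v5, v6, v7, v8]
    ext p
    simp only [Set.mem_union, Set.mem_neg, Set.mem_insert_iff, Set.mem_singleton_iff,
      Finset.mem_coe]
    revert p; decide
  have i2 : phi '' B2 = ↑F2 := by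
    rw [hB2, Set.image_union, image_neg_eq]
    simp only [Set.image_insert_eq, Set.image_singleton, v1, v2, v3, v4, v5, v8]
    ext p
    simp only [Set.mem_union, Set.mem_neg, Set.mem_insert_iff, Set.mem_singleton_iff,
      Finset.mem_coe]
    revert p; decide
  have i3 : phi '' B3 = ↑F3 := by
    rw [hB3, Set.image_union, Set.image_union, image_neg_eq]
    simp only [Set.image_insert_eq, Set.image_singleton, v0, v1, v2, v11, v12]
    ext p
    simp only [Set.mem_union, Set.mem_neg, Set.mem_insert_iff, Set.mem_singleton_iff,
      Finset.mem_coe]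
    revert p; decide
  have i4 : phi '' B4 = ↑F4 := by
    rw [hB4, Set.image_union, Set.image_union, image_neg_eq]
    simp only [Set.image_insert_eq, Set.image_singleton, v0, v5, v8, v9, v10]
    ext p
    simp only [Set.mem_union, Set.mem_neg, Set.mem_insert_iff, Set.mem_singleton_iff,
      Finset.mem_coe]
    revert p; decide
  have hinj := SDS.phi.injective
  have ncard_eq : ∀ (B : Set F25) (F : Finset (ZMod 5 × ZMod 5)),
      phi '' B = ↑F → B.ncard = F.card := by
    intro B F h
    rw [← Set.ncard_image_of_injective B hinj, h, Set.ncard_coe_finset]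
  have symm_eq : ∀ (B : Set F25) (F : Finset (ZMod 5 × ZMod 5)),
      phi '' B = ↑F → -(↑F : Set (ZMod 5 × ZMod 5)) = ↑F → B = -B := by
    intro B F h hF
    apply Set.image_injective.mpr hinj
    rw [image_neg_eq, h, hF]
  refine ⟨ncard_eq _ _ i1, ncard_eq _ _ i2, ncard_eq _ _ i3, ncard_eq _ _ i4,
    symm_eq _ _ i1 ?_, symm_eq _ _ i2 ?_, symm_eq _ _ i3 ?_, symm_eq _ _ i4 ?_, ?_⟩
  · ext p; simp only [Set.mem_neg, Finset.mem_coe]; revert p; decide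
  · ext p; simp only [Set.mem_neg, Finset.mem_coe]; revert p; decide
  · ext p; simp only [Set.mem_neg, Finset.mem_coe]; revert p; decide
  · ext p; simp only [Set.mem_neg, Finset.mem_coe]; revert p; decide
  · intro a ha
    rw [diffCount_equiv phi B1 a, diffCount_equiv phi B2 a, diffCount_equiv phi B3 a,
      diffCount_equiv phi B4 a, i1, i2, i3, i4, diffCount_finset, diffCount_finset,
      diffCount_finset, diffCount_finset]
    exact count_lemma (phi a) (fun h => ha (hinj (h.trans (map_zero phi).symm)))
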